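/- Let α be a positive Borel measure on ℝ with all moments finite (∫_ℝ |t|^k dα(t) < ∞ for every k ≥ 0), let n ≥ 0 and m ≥ 1 be integers, and let π₀, π₁, …, π_{n+m−1} be polynomials such that each π_j is monic of degree j and ∫_ℝ π_j(t) π_k(t) dα(t) = 0 whenever j ≠ k. Assume ∫_{ℝ^n} Δ(t₁,…,t_n)² dα(t₁)…dα(t_n) > 0. Then for all reals μ₁,…,μ_m: det( π_{n+j−1}(μ_i) )_{i,j=1}^m = Δ(μ₁,…,μ_m) · ( ∫_{ℝ^n} ∏_{i=1}^n ∏_{j=1}^m (μ_j−t_i) · Δ(t₁,…,t_n)² · ∏_{i=1}^n dα(t_i) ) / ( ∫_{ℝ^n} Δ(t₁,…,t_n)² · ∏_{i=1}^n dα(t_i) ). (This is the Brezin–Hikami determinant formula, Proposition 3.4 of the paper.) -/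

import Mathlib

open MeasureTheory Finset Matrix

/-- The entire function `₀F₁(1;x) = ∑ xⁿ/(n!)²` (real argument). -/
noncomputable def f01 (x : ℝ) : ℝ := ∑' n : ℕ, x ^ n / ((n.factorial : ℝ)) ^ 2

/-- The entire function `₀F₁(1;x) = ∑ xⁿ/(n!)²` (complex argument). -/
noncomputable def f01C (x : ℂ) : ℂ := ∑' n : ℕ, x ^ n / ((n.factorial : ℂ)) ^ 2

/-- Vandermonde product `Δ(x₁,…,x_m) = ∏_{i<j} (x_j − x_i)`. -/
noncomputable def vand {m : ℕ} (x : Fin m → ℝ) : ℝ :=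
  ∏ p ∈ Finset.univ.filter (fun p : Fin m × Fin m => p.1 < p.2), (x p.2 - x p.1)

/-- The nonnegative orthant `[0,∞)^m`. -/
def orth (m : ℕ) : Set (Fin m → ℝ) := Set.univ.pi fun _ => Set.Ici (0 : ℝ)

/-- The joint density `Δ(x)·det(₀F₁(1;ω_k x_j))·∏ x_i^L e^{−x_i}` of the squared
singular values. -/
noncomputable def dens (N L : ℕ) (ω : Fin N → ℝ) (x : Fin N → ℝ) : ℝ :=
  vand x * Matrix.det (Matrix.of fun k j : Fin N => f01 (ω k * x j)) *
    ∏ i, (x i ^ L * Real.exp (-x i))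

/-- The matrix weight `w(X) = exp(−Tr(XX*)+Tr(ΩX)+Tr(X*Ω*))·det(X*X)^L`
(complex-valued; its value is in fact real). -/
noncomputable def W (N L : ℕ) (Ω X : Matrix (Fin N) (Fin N) ℂ) : ℂ :=
  Complex.exp (-Matrix.trace (X * Xᴴ) + Matrix.trace (Ω * X) + Matrix.trace (Xᴴ * Ωᴴ)) *
    Matrix.det (Xᴴ * X) ^ L

/-- Matrix-model average `⟨h⟩ = (∫ h(X) w(X) dX)/(∫ w(X) dX)`, the integrals being
over Lebesgue measure on the 2N² real coordinates of X. -/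
noncomputable def mavg (N L : ℕ) (Ω : Matrix (Fin N) (Fin N) ℂ)
    (h : Matrix (Fin N) (Fin N) ℂ → ℂ) : ℂ :=
  (∫ X : Fin N → Fin N → ℂ, h (Matrix.of X) * W N L Ω (Matrix.of X)) /
    ∫ X : Fin N → Fin N → ℂ, W N L Ω (Matrix.of X)

/-- Eigenvalue-ensemble average `E_{ω,L}[g]` with respect to the density `dens`. -/
noncomputable def Eavg (N L : ℕ) (ω : Fin N → ℝ) (g : (Fin N → ℝ) → ℂ) : ℂ :=
  (∫ x in orth N, g x * (dens N L ω x : ℂ)) /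
    ((∫ x in orth N, dens N L ω x : ℝ) : ℂ)

/-- The normalization `Ñ_L = ∫_{[0,∞)^L} ∏_{i,j}(t_i+ω_j)·Δ(t)²·∏ e^{−t_i} dt`. -/
noncomputable def Ntilde (N L : ℕ) (ω : Fin N → ℝ) : ℝ :=
  ∫ t in orth L, (∏ i, ∏ j, (t i + ω j)) * vand t ^ 2 * ∏ i, Real.exp (-(t i))

/-- The degenerate normalization `Ñ_L(ρ) = ∫_{[0,∞)^L} ∏ (t_i+ρ)^N·Δ(t)²·∏ e^{−t_i} dt`. -/
noncomputable def NtildeDeg (N L : ℕ) (ρ : ℝ) : ℝ :=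
  ∫ t in orth L, (∏ i, (t i + ρ) ^ N) * vand t ^ 2 * ∏ i, Real.exp (-(t i))

/-- The Laguerre polynomial `L_n(x) = ∑_{k=0}^n (n choose k)(−x)^k/k!`. -/
noncomputable def laguerre (n : ℕ) (x : ℝ) : ℝ :=
  ∑ k ∈ Finset.range (n + 1), (n.choose k : ℝ) * (-x) ^ k / (k.factorial : ℝ)

/-- The monic Laguerre polynomial `π_n(x) = (−1)^n n! L_n(x)`. -/
noncomputable def piL (n : ℕ) (x : ℝ) : ℝ := (-1 : ℝ) ^ n * (n.factorial : ℝ) * laguerre n x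

/-- The Bessel function `J_k(x) = ∑_m (−1)^m (x/2)^{2m+k}/(m!(m+k)!)`. -/
noncomputable def besselJ (k : ℕ) (x : ℝ) : ℝ :=
  ∑' m : ℕ, (-1 : ℝ) ^ m * (x / 2) ^ (2 * m + k) / ((m.factorial : ℝ) * ((m + k).factorial : ℝ))

/-- The moment matrix `G_{i,j} = (i−1)!·e^{ω_j}·L_{i−1}(−ω_j)` (0-based indices). -/
noncomputable def Gmat (N : ℕ) (ω : Fin N → ℝ) : Matrix (Fin N) (Fin N) ℝ :=
  Matrix.of fun i j => ((i : ℕ).factorial : ℝ) * Real.exp (ω j) * laguerre (i : ℕ) (-ω j)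


lemma vand_eq_ite {k : ℕ} (x : Fin k → ℝ) :
    vand x = ∏ a : Fin k, ∏ b : Fin k, if a < b then x b - x a else 1 := by
  rw [vand, Finset.prod_filter, ← Finset.prod_product']
  rw [Finset.univ_product_univ]

lemma vand_append {n m : ℕ} (t : Fin n → ℝ) (μ : Fin m → ℝ) :
    vand (Fin.append t μ) = vand t * vand μ * ∏ i, ∏ j, (μ j - t i) := by
  have hll : ∀ i i' : Fin n, ((finSumFinEquiv (Sum.inl i) : Fin (n+m)) <
      finSumFinEquiv (Sum.inl i')) ↔ i < i' := by
    intro i i'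
    simp only [finSumFinEquiv_apply_left, Fin.lt_def, Fin.coe_castAdd]
  have hlr : ∀ (i : Fin n) (j : Fin m), ((finSumFinEquiv (Sum.inl i) : Fin (n+m)) <
      finSumFinEquiv (Sum.inr j)) := by
    intro i j
    have := i.isLt
    simp only [finSumFinEquiv_apply_left, finSumFinEquiv_apply_right, Fin.lt_def,
      Fin.coe_castAdd, Fin.coe_natAdd]
    omega
  have hrl : ∀ (j : Fin m) (i : Fin n), ¬ ((finSumFinEquiv (Sum.inr j) : Fin (n+m)) <
      finSumFinEquiv (Sum.inl i)) := by
    intro j i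
    have := i.isLt
    simp only [finSumFinEquiv_apply_left, finSumFinEquiv_apply_right, Fin.lt_def,
      Fin.coe_castAdd, Fin.coe_natAdd]
    omega
  have hrr : ∀ j j' : Fin m, ((finSumFinEquiv (Sum.inr j) : Fin (n+m)) <
      finSumFinEquiv (Sum.inr j')) ↔ j < j' := by
    intro j j'
    simp only [finSumFinEquiv_apply_right, Fin.lt_def, Fin.coe_natAdd]
    omega
  have hval : ∀ s : Fin n ⊕ Fin m, Fin.append t μ (finSumFinEquiv s) = Sum.elim t μ s := by
    rintro (i|j)
    · rw [finSumFinEquiv_apply_left]; exact Fin.append_left t μ i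
    · rw [finSumFinEquiv_apply_right]; exact Fin.append_right t μ j
  rw [vand_eq_ite, vand_eq_ite, vand_eq_ite]
  rw [← Equiv.prod_comp finSumFinEquiv
    (fun a => ∏ b : Fin (n+m), if a < b then Fin.append t μ b - Fin.append t μ a else 1)]
  have inner : ∀ s : Fin n ⊕ Fin m,
      (∏ b : Fin (n+m), if finSumFinEquiv s < b then Fin.append t μ b - Fin.append t μ (finSumFinEquiv s) else 1)
      = ∏ s' : Fin n ⊕ Fin m, if finSumFinEquiv s < finSumFinEquiv s' then Sum.elim t μ s' - Sum.elim t μ s else 1 := by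
    intro s
    rw [← Equiv.prod_comp finSumFinEquiv
      (fun b => if finSumFinEquiv s < b then Fin.append t μ b - Fin.append t μ (finSumFinEquiv s) else 1)]
    simp only [hval]
  simp only [inner]
  rw [Fintype.prod_sum_type]
  simp only [Fintype.prod_sum_type, Sum.elim_inl, Sum.elim_inr]
  simp only [hll, hlr, hrr, hrl, if_true, if_false, Finset.prod_const_one, mul_one]
  rw [Finset.prod_mul_distrib]
  ring


lemma aux_integrable_polyEval (α : Measure ℝ) [SigmaFinite α]
    (hmom : ∀ k : ℕ, Integrable (fun t => |t| ^ k) α) (p : Polynomial ℝ) :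
    Integrable (fun t => p.eval t) α := by
  have hpow : ∀ k : ℕ, Integrable (fun t : ℝ => t ^ k) α := by
    intro k
    refine (hmom k).mono' ((continuous_pow k).aestronglyMeasurable) ?_
    filter_upwards with t
    rw [Real.norm_eq_abs, abs_pow]
  have : (fun t => p.eval t) = fun t =>
      ∑ k ∈ Finset.range (p.natDegree + 1), p.coeff k * t ^ k := by
    funext t
    rw [Polynomial.eval_eq_sum_range]
  rw [this]
  exact integrable_finset_sum _ fun k _ => (hpow k).const_mul _

lemma vand_eq {k : ℕ} (x : Fin k → ℝ) :
    vand x = ∏ i : Fin k, ∏ j ∈ Finset.Ioi i, (x j - x i) := by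
  rw [vand_eq_ite]
  refine Finset.prod_congr rfl fun i _ => ?_
  rw [← Finset.prod_filter]
  refine Finset.prod_congr ?_ fun _ _ => rfl
  ext j; simp [Finset.mem_Ioi]

lemma vand_eq_det {k : ℕ} (π : ℕ → Polynomial ℝ)
    (hmonic : ∀ j < k, (π j).Monic ∧ (π j).natDegree = j) (x : Fin k → ℝ) :
    Matrix.det (Matrix.of fun i j : Fin k => (π (j : ℕ)).eval (x i)) = vand x := by
  rw [← Matrix.det_eval_matrixOfPolynomials_eq_det_vandermonde x (fun j => π (j : ℕ))
      (fun j => (hmonic j j.isLt).2) (fun j => (hmonic j j.isLt).1),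
    Matrix.det_vandermonde, vand_eq]

lemma integrable_pi_prod {n : ℕ} (α : Measure ℝ) [SigmaFinite α] (f : Fin n → ℝ → ℝ)
    (hf : ∀ i, Integrable (f i) α) :
    Integrable (fun t : Fin n → ℝ => ∏ i, f i (t i)) (Measure.pi fun _ => α) := by
  letI : MeasureSpace ℝ := ⟨α⟩
  exact Integrable.fintype_prod hf

lemma integral_pi_prod {n : ℕ} (α : Measure ℝ) [SigmaFinite α] (f : Fin n → ℝ → ℝ) :
    ∫ t : Fin n → ℝ, ∏ i, f i (t i) ∂(Measure.pi fun _ => α) = ∏ i, ∫ t, f i t ∂α := by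
  letI : MeasureSpace ℝ := ⟨α⟩
  exact integral_fintype_prod_eq_prod f

lemma andreief (n m : ℕ) (α : Measure ℝ) [SigmaFinite α] (π : ℕ → Polynomial ℝ)
    (hint : ∀ a b : ℕ, Integrable (fun s => (π a).eval s * (π b).eval s) α)
    (horth : ∀ j < n + m, ∀ k < n + m, j ≠ k → (∫ s, (π j).eval s * (π k).eval s ∂α) = 0)
    (μ : Fin m → ℝ) :
    (∫ t : Fin n → ℝ,
        Matrix.det (Matrix.of fun i j : Fin (n+m) => (π (j:ℕ)).eval (Fin.append t μ i)) *
        Matrix.det (Matrix.of fun i j : Fin n => (π (j:ℕ)).eval (t i))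
        ∂(Measure.pi fun _ => α))
      = (n.factorial : ℝ) * (∏ k : Fin n, ∫ s, (π (k:ℕ)).eval s * (π (k:ℕ)).eval s ∂α) *
        Matrix.det (Matrix.of fun i j : Fin m => (π (n + (j:ℕ))).eval (μ i)) := by
  classical
  set c : ℕ → ℕ → ℝ := fun a b => ∫ s, (π a).eval s * (π b).eval s ∂α with hc
  set ι : Fin n ⊕ Fin m → ℕ := fun s => ((finSumFinEquiv s : Fin (n+m)) : ℕ) with hι
  have hι_l : ∀ a : Fin n, ι (Sum.inl a) = (a : ℕ) := fun a => by
    simp [hι, finSumFinEquiv_apply_left]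
  have hι_r : ∀ b : Fin m, ι (Sum.inr b) = n + (b : ℕ) := fun b => by
    simp [hι, finSumFinEquiv_apply_right]
  have hι_lt : ∀ s, ι s < n + m := fun s => (finSumFinEquiv s).isLt
  -- expansion of the big determinant
  have hdetbig : ∀ t : Fin n → ℝ,
      Matrix.det (Matrix.of fun i j : Fin (n+m) => (π (j:ℕ)).eval (Fin.append t μ i)) =
      ∑ q : Equiv.Perm (Fin n ⊕ Fin m), ((Equiv.Perm.sign q : ℤ) : ℝ) *
        ((∏ i : Fin n, (π (ι (q (Sum.inl i)))).eval (t i)) *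
          ∏ j : Fin m, (π (ι (q (Sum.inr j)))).eval (μ j)) := by
    intro t
    rw [← Matrix.det_transpose, Matrix.det_apply']
    rw [← Equiv.sum_comp (finSumFinEquiv.permCongr :
        Equiv.Perm (Fin n ⊕ Fin m) ≃ Equiv.Perm (Fin (n+m)))]
    refine Finset.sum_congr rfl fun q _ => ?_
    rw [Equiv.Perm.sign_permCongr]
    congr 1
    rw [← Equiv.prod_comp finSumFinEquiv
      (fun i => (Matrix.of fun i j : Fin (n+m) => (π (j:ℕ)).eval (Fin.append t μ i))ᵀ
        ((finSumFinEquiv.permCongr q) i) i)]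
    rw [Fintype.prod_sum_type]
    congr 1
    · refine Finset.prod_congr rfl fun i _ => ?_
      simp only [Matrix.transpose_apply, Matrix.of_apply, Equiv.permCongr_apply,
        finSumFinEquiv_symm_apply_castAdd, finSumFinEquiv_apply_left, hι]
      rw [Fin.append_left]
    · refine Finset.prod_congr rfl fun j _ => ?_
      simp only [Matrix.transpose_apply, Matrix.of_apply, Equiv.permCongr_apply,
        finSumFinEquiv_symm_apply_natAdd, finSumFinEquiv_apply_right, hι]
      rw [Fin.append_right]
  have hdetsmall : ∀ t : Fin n → ℝ,
      Matrix.det (Matrix.of fun i j : Fin n => (π (j:ℕ)).eval (t i)) =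
      ∑ τ : Equiv.Perm (Fin n), ((Equiv.Perm.sign τ : ℤ) : ℝ) *
        ∏ i : Fin n, (π ((τ i : ℕ))).eval (t i) := by
    intro t
    rw [← Matrix.det_transpose, Matrix.det_apply']
    refine Finset.sum_congr rfl fun τ _ => rfl
  -- pointwise product expansion
  have hpoint : ∀ t : Fin n → ℝ,
      Matrix.det (Matrix.of fun i j : Fin (n+m) => (π (j:ℕ)).eval (Fin.append t μ i)) *
      Matrix.det (Matrix.of fun i j : Fin n => (π (j:ℕ)).eval (t i)) =
      ∑ q : Equiv.Perm (Fin n ⊕ Fin m), ∑ τ : Equiv.Perm (Fin n),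
        (((Equiv.Perm.sign q : ℤ) : ℝ) * ((Equiv.Perm.sign τ : ℤ) : ℝ) *
          ∏ j : Fin m, (π (ι (q (Sum.inr j)))).eval (μ j)) *
        ∏ i : Fin n, ((π (ι (q (Sum.inl i)))).eval (t i) * (π ((τ i : ℕ))).eval (t i)) := by
    intro t
    rw [hdetbig t, hdetsmall t, Finset.sum_mul_sum]
    refine Finset.sum_congr rfl fun q _ => Finset.sum_congr rfl fun τ _ => ?_
    rw [Finset.prod_mul_distrib]
    ring
  -- exchange integral and sums
  have hexp : (∫ t : Fin n → ℝ,
        Matrix.det (Matrix.of fun i j : Fin (n+m) => (π (j:ℕ)).eval (Fin.append t μ i)) *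
        Matrix.det (Matrix.of fun i j : Fin n => (π (j:ℕ)).eval (t i))
        ∂(Measure.pi fun _ => α)) =
      ∑ q : Equiv.Perm (Fin n ⊕ Fin m), ∑ τ : Equiv.Perm (Fin n),
        (((Equiv.Perm.sign q : ℤ) : ℝ) * ((Equiv.Perm.sign τ : ℤ) : ℝ) *
          ∏ j : Fin m, (π (ι (q (Sum.inr j)))).eval (μ j)) *
        ∏ i : Fin n, c (ι (q (Sum.inl i))) ((τ i : ℕ)) := by
    simp only [hpoint]
    rw [integral_finset_sum _ (fun q _ => integrable_finset_sum _ (fun τ _ =>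
      Integrable.const_mul (integrable_pi_prod α
        (fun i s => (π (ι (q (Sum.inl i)))).eval s * (π ((τ i : ℕ))).eval s)
        (fun i => hint _ _)) _))]
    refine Finset.sum_congr rfl fun q _ => ?_
    rw [integral_finset_sum _ (fun τ _ =>
      Integrable.const_mul (integrable_pi_prod α
        (fun i s => (π (ι (q (Sum.inl i)))).eval s * (π ((τ i : ℕ))).eval s)
        (fun i => hint _ _)) _)]
    refine Finset.sum_congr rfl fun τ _ => ?_
    rw [MeasureTheory.integral_const_mul]
    congr 1
    exact integral_pi_prod α
      (fun i s => (π (ι (q (Sum.inl i)))).eval s * (π ((τ i : ℕ))).eval s)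
  rw [hexp, Finset.sum_comm]
  -- for each fixed τ, only permutations of sumCongr form survive
  have hτsq : ∀ τ : Equiv.Perm (Fin n),
      ((Equiv.Perm.sign τ : ℤ) : ℝ) * ((Equiv.Perm.sign τ : ℤ) : ℝ) = 1 := by
    intro τ
    rcases Int.units_eq_one_or (Equiv.Perm.sign τ) with h | h <;> rw [h] <;> norm_num
  have hfix : ∀ τ : Equiv.Perm (Fin n),
      (∑ q : Equiv.Perm (Fin n ⊕ Fin m),
        (((Equiv.Perm.sign q : ℤ) : ℝ) * ((Equiv.Perm.sign τ : ℤ) : ℝ) *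
          ∏ j : Fin m, (π (ι (q (Sum.inr j)))).eval (μ j)) *
        ∏ i : Fin n, c (ι (q (Sum.inl i))) ((τ i : ℕ)))
      = (∏ k : Fin n, c (k : ℕ) (k : ℕ)) *
        ∑ ρ : Equiv.Perm (Fin m), ((Equiv.Perm.sign ρ : ℤ) : ℝ) *
          ∏ j : Fin m, (π (n + ((ρ j : ℕ)))).eval (μ j) := by
    intro τ
    have himg : ∀ q : Equiv.Perm (Fin n ⊕ Fin m), q ∉ Finset.image
        (fun ρ : Equiv.Perm (Fin m) => Equiv.sumCongr τ ρ) Finset.univ →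
        (((Equiv.Perm.sign q : ℤ) : ℝ) * ((Equiv.Perm.sign τ : ℤ) : ℝ) *
          ∏ j : Fin m, (π (ι (q (Sum.inr j)))).eval (μ j)) *
        ∏ i : Fin n, c (ι (q (Sum.inl i))) ((τ i : ℕ)) = 0 := by
      intro q hq
      by_cases hall : ∀ i : Fin n, ι (q (Sum.inl i)) = ((τ i : ℕ))
      · exfalso
        apply hq
        have hinl : ∀ i, q (Sum.inl i) = Sum.inl (τ i) := by
          intro i
          rcases hs : q (Sum.inl i) with a | b
          · have h1 := hall i
            rw [hs, hι_l] at h1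
            rw [Fin.ext h1]
          · have h1 := hall i
            rw [hs, hι_r] at h1
            have h2 := (τ i).isLt
            omega
        have hqr : ∀ j : Fin m, ∃ b : Fin m, q (Sum.inr j) = Sum.inr b := by
          intro j
          rcases hs : q (Sum.inr j) with a | b
          · exfalso
            have h1 : q (Sum.inl (τ.symm a)) = Sum.inl a := by
              rw [hinl, Equiv.apply_symm_apply]
            have h2 := q.injective (hs.trans h1.symm)
            simp at h2
          · exact ⟨b, rfl⟩
        choose g hg using hqr
        have hginj : Function.Injective g := by
          intro b b' hbb
          have : q (Sum.inr b) = q (Sum.inr b') := by rw [hg, hg, hbb]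
          simpa using q.injective this
        let ρ : Equiv.Perm (Fin m) :=
          Equiv.ofBijective g (Finite.injective_iff_bijective.mp hginj)
        refine Finset.mem_image.mpr ⟨ρ, Finset.mem_univ ρ, ?_⟩
        refine Equiv.ext ?_
        rintro (i | j)
        · simpa using (hinl i).symm
        · simpa [ρ, Equiv.ofBijective] using (hg j).symm
      · push_neg at hall
        obtain ⟨i, hi⟩ := hall
        have hz : c (ι (q (Sum.inl i))) ((τ i : ℕ)) = 0 :=
          horth _ (hι_lt _) _ (lt_of_lt_of_le (τ i).isLt (Nat.le_add_right n m)) hi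
        rw [Finset.prod_eq_zero (Finset.mem_univ i) hz, mul_zero]
    rw [← Finset.sum_subset (Finset.subset_univ _) (fun q _ hq => himg q hq)]
    rw [Finset.sum_image (fun ρ _ ρ' _ hρ => by
      refine Equiv.ext fun b => ?_
      have := congrArg (fun f : Equiv.Perm (Fin n ⊕ Fin m) => f (Sum.inr b)) hρ
      simpa using this)]
    rw [Finset.mul_sum]
    refine Finset.sum_congr rfl fun ρ _ => ?_
    have hsgn : ((Equiv.Perm.sign (Equiv.sumCongr τ ρ) : ℤ) : ℝ) =
        ((Equiv.Perm.sign τ : ℤ) : ℝ) * ((Equiv.Perm.sign ρ : ℤ) : ℝ) := by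
      rw [Equiv.Perm.sign_sumCongr]
      push_cast
      ring
    have happ_l : ∀ i : Fin n, (Equiv.sumCongr τ ρ) (Sum.inl i) = Sum.inl (τ i) := by
      intro i; simp
    have happ_r : ∀ j : Fin m, (Equiv.sumCongr τ ρ) (Sum.inr j) = Sum.inr (ρ j) := by
      intro j; simp
    simp only [happ_l, happ_r, hι_l, hι_r, hsgn]
    have hprodc : (∏ i : Fin n, c ((τ i : ℕ)) ((τ i : ℕ))) =
        ∏ k : Fin n, c (k : ℕ) (k : ℕ) :=
      Equiv.prod_comp τ (fun k => c (k : ℕ) (k : ℕ))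
    rw [hprodc]
    linear_combination (((Equiv.Perm.sign ρ : ℤ) : ℝ) *
      (∏ x : Fin m, Polynomial.eval (μ x) (π (n + ((ρ x : ℕ))))) *
      ∏ k : Fin n, c (k : ℕ) (k : ℕ)) * hτsq τ
  simp only [hfix]
  rw [Finset.sum_const, Finset.card_univ, Fintype.card_perm, Fintype.card_fin, nsmul_eq_mul]
  have hdetμ : Matrix.det (Matrix.of fun i j : Fin m => (π (n + (j:ℕ))).eval (μ i)) =
      ∑ ρ : Equiv.Perm (Fin m), ((Equiv.Perm.sign ρ : ℤ) : ℝ) *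
        ∏ j : Fin m, (π (n + ((ρ j : ℕ)))).eval (μ j) := by
    rw [← Matrix.det_transpose, Matrix.det_apply']
    rfl
  rw [← hdetμ]
  ring


theorem statement19 (n m : ℕ) (hm : 1 ≤ m) (α : Measure ℝ) [SigmaFinite α]
    (hmom : ∀ k : ℕ, Integrable (fun t => |t| ^ k) α)
    (π : ℕ → Polynomial ℝ)
    (hmonic : ∀ j < n + m, (π j).Monic ∧ (π j).natDegree = j)
    (horth : ∀ j < n + m, ∀ k < n + m, j ≠ k →
      (∫ t, (π j).eval t * (π k).eval t ∂α) = 0)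
    (hpos : 0 < ∫ t : Fin n → ℝ, vand t ^ 2 ∂(Measure.pi fun _ => α))
    (μ : Fin m → ℝ) :
    Matrix.det (Matrix.of fun i j : Fin m => (π (n + (j : ℕ))).eval (μ i)) =
      vand μ *
        (∫ t : Fin n → ℝ, (∏ i, ∏ j, (μ j - t i)) * vand t ^ 2 ∂(Measure.pi fun _ => α)) /
        ∫ t : Fin n → ℝ, vand t ^ 2 ∂(Measure.pi fun _ => α) := by
  classical
  set pm := (Measure.pi fun _ : Fin n => α) with hpm
  have hint : ∀ a b : ℕ, Integrable (fun s => (π a).eval s * (π b).eval s) α := by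
    intro a b
    have := aux_integrable_polyEval α hmom (π a * π b)
    simpa [Polynomial.eval_mul] using this
  set c : ℕ → ℕ → ℝ := fun a b => ∫ s, (π a).eval s * (π b).eval s ∂α with hc
  have hvand0 : ∀ x : Fin 0 → ℝ, vand x = 1 := by
    intro x
    rw [vand]
    exact Finset.prod_eq_one fun p _ => p.1.elim0
  -- the key Andreief evaluations
  have hKey := andreief n m α π hint horth μ
  have hKey0 := andreief n 0 α π hint
    (fun j hj k hk hjk => horth j (by omega) k (by omega) hjk) (fun j => j.elim0)
  -- pointwise identities
  have hsmall : ∀ t : Fin n → ℝ,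
      Matrix.det (Matrix.of fun i j : Fin n => (π (j:ℕ)).eval (t i)) = vand t :=
    fun t => vand_eq_det π (fun j hj => hmonic j (by omega)) t
  have hbig0 : ∀ t : Fin n → ℝ,
      Matrix.det (Matrix.of fun i j : Fin (n+0) => (π (j:ℕ)).eval
        (Fin.append t (fun j : Fin 0 => j.elim0) i)) = vand t := by
    intro t
    rw [vand_eq_det π (fun j hj => hmonic j (by omega))
        (Fin.append t (fun j : Fin 0 => j.elim0)),
      vand_append t (fun j : Fin 0 => j.elim0), hvand0]
    simp
  have hbig : ∀ t : Fin n → ℝ,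
      Matrix.det (Matrix.of fun i j : Fin (n+m) => (π (j:ℕ)).eval (Fin.append t μ i)) =
        vand t * vand μ * ∏ i, ∏ j, (μ j - t i) := by
    intro t
    rw [vand_eq_det π (fun j hj => hmonic j (by omega)) (Fin.append t μ), vand_append t μ]
  -- evaluate the denominator
  have hD : (∫ t : Fin n → ℝ, vand t ^ 2 ∂pm) =
      (n.factorial : ℝ) * ∏ k : Fin n, c (k : ℕ) (k : ℕ) := by
    have h1 : ∀ t : Fin n → ℝ, vand t ^ 2 =
        Matrix.det (Matrix.of fun i j : Fin (n+0) => (π (j:ℕ)).eval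
          (Fin.append t (fun j : Fin 0 => j.elim0) i)) *
        Matrix.det (Matrix.of fun i j : Fin n => (π (j:ℕ)).eval (t i)) := by
      intro t
      rw [hbig0 t, hsmall t, sq]
    simp only [h1]
    rw [hKey0, Matrix.det_fin_zero, mul_one]
  -- evaluate the numerator
  have hN : vand μ * (∫ t : Fin n → ℝ, (∏ i, ∏ j, (μ j - t i)) * vand t ^ 2 ∂pm) =
      (n.factorial : ℝ) * (∏ k : Fin n, c (k : ℕ) (k : ℕ)) *
        Matrix.det (Matrix.of fun i j : Fin m => (π (n + (j : ℕ))).eval (μ i)) := by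
    rw [← MeasureTheory.integral_const_mul, ← hKey]
    refine MeasureTheory.integral_congr_ae (Filter.Eventually.of_forall fun t => ?_)
    simp only [hbig, hsmall]
    ring
  have hD0 : (∫ t : Fin n → ℝ, vand t ^ 2 ∂pm) ≠ 0 := ne_of_gt hpos
  rw [eq_div_iff hD0, hN, hD]
  ring
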